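/- (Noether AF+BG for the plane, weak form) Let F, G ∈ k[x₀, x₁, x₂] be homogeneous polynomials with no common factor, and H a homogeneous polynomial such that at every point of ℙ² the element H lies in the ideal generated by F and G in the local ring. Then H = AF + BG for homogeneous polynomials A, B of the appropriate degrees. -/

import Mathlib

open MvPolynomial Ideal Finset

section Aux

variable {k : Type*} [Field k]

/-- If `X i * c` lies in the monomial prime ideal generated by the variables in `S`
and `i ∉ S`, then `c` lies in that ideal. -/
lemma aux_var_cancel_mem {i : Fin 3} {S : Set (Fin 3)} (hiS : i ∉ S)
    {c : MvPolynomial (Fin 3) k}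
    (h : MvPolynomial.X i * c ∈ Ideal.span (MvPolynomial.X '' S : Set (MvPolynomial (Fin 3) k))) :
    c ∈ Ideal.span (MvPolynomial.X '' S : Set (MvPolynomial (Fin 3) k)) := by
  rw [MvPolynomial.mem_ideal_span_X_image] at h ⊢
  intro m hm
  have hm' : Finsupp.single i 1 + m ∈ (MvPolynomial.X i * c).support := by
    rw [MvPolynomial.support_X_mul]
    exact Finset.mem_map_of_mem _ hm
  obtain ⟨j, hjS, hj⟩ := h _ hm'
  refine ⟨j, hjS, ?_⟩
  have hji : i ≠ j := fun e => hiS (e ▸ hjS)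
  simpa [Finsupp.single_apply, hji] using hj

/-- Variables are "prime to each other": from `X i * u = X j * v` with `i ≠ j` we get
`X j ∣ u`. -/
lemma aux_var_dvd {i j : Fin 3} (hij : i ≠ j) {u v : MvPolynomial (Fin 3) k}
    (h : MvPolynomial.X i * u = MvPolynomial.X j * v) : MvPolynomial.X j ∣ u := by
  have h1 : MvPolynomial.X i * u ∈
      Ideal.span (MvPolynomial.X '' ({j} : Set (Fin 3)) : Set (MvPolynomial (Fin 3) k)) := by
    rw [Set.image_singleton, Ideal.mem_span_singleton]
    exact ⟨v, h⟩
  have h2 := aux_var_cancel_mem (by simpa using hij) h1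
  rwa [Set.image_singleton, Ideal.mem_span_singleton] at h2

/-- Key local-to-global step: if `X 0 * w`, `X 1 * w`, `X 2 * w` all lie in `(F, G)` with
`F`, `G` coprime, then `w ∈ (F, G)`. -/
lemma aux_keyL {F G : MvPolynomial (Fin 3) k} (hF0 : F ≠ 0) (hcop : IsRelPrime F G)
    {w : MvPolynomial (Fin 3) k}
    (h0 : MvPolynomial.X 0 * w ∈ Ideal.span {F, G})
    (h1 : MvPolynomial.X 1 * w ∈ Ideal.span {F, G})
    (h2 : MvPolynomial.X 2 * w ∈ Ideal.span {F, G}) :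
    w ∈ Ideal.span {F, G} := by
  rw [Ideal.mem_span_pair] at h0 h1 h2 ⊢
  obtain ⟨a0, b0, e0⟩ := h0
  obtain ⟨a1, b1, e1⟩ := h1
  obtain ⟨a2, b2, e2⟩ := h2
  -- pair (0,1)
  obtain ⟨c2, hc2⟩ : F ∣ MvPolynomial.X 1 * b0 - MvPolynomial.X 0 * b1 :=
    hcop.dvd_of_dvd_mul_right
      ⟨MvPolynomial.X 0 * a1 - MvPolynomial.X 1 * a0, by
        linear_combination MvPolynomial.X 1 * e0 - MvPolynomial.X 0 * e1⟩
  -- pair (0,2)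
  obtain ⟨c1, hc1⟩ : F ∣ MvPolynomial.X 2 * b0 - MvPolynomial.X 0 * b2 :=
    hcop.dvd_of_dvd_mul_right
      ⟨MvPolynomial.X 0 * a2 - MvPolynomial.X 2 * a0, by
        linear_combination MvPolynomial.X 2 * e0 - MvPolynomial.X 0 * e2⟩
  -- pair (1,2)
  obtain ⟨c0, hc0⟩ : F ∣ MvPolynomial.X 2 * b1 - MvPolynomial.X 1 * b2 :=
    hcop.dvd_of_dvd_mul_right
      ⟨MvPolynomial.X 1 * a2 - MvPolynomial.X 2 * a1, by
        linear_combination MvPolynomial.X 2 * e1 - MvPolynomial.X 1 * e2⟩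
  -- companion relation for the `a`'s, pair (0,1)
  have ha01 : MvPolynomial.X 1 * a0 - MvPolynomial.X 0 * a1 = -(c2 * G) := by
    apply mul_left_cancel₀ hF0
    linear_combination MvPolynomial.X 1 * e0 - MvPolynomial.X 0 * e1 - G * hc2
  -- cocycle relation
  have hco : MvPolynomial.X 2 * c2 - MvPolynomial.X 1 * c1 + MvPolynomial.X 0 * c0 = 0 := by
    apply mul_left_cancel₀ hF0
    linear_combination MvPolynomial.X 1 * hc1 - MvPolynomial.X 2 * hc2 - MvPolynomial.X 0 * hc0
  -- split c0
  have hc0mem : c0 ∈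
      Ideal.span (MvPolynomial.X '' ({1, 2} : Set (Fin 3)) : Set (MvPolynomial (Fin 3) k)) := by
    apply aux_var_cancel_mem (i := 0) (by simp)
    rw [Set.image_insert_eq, Set.image_singleton, Ideal.mem_span_pair]
    exact ⟨c1, -c2, by linear_combination -hco⟩
  rw [Set.image_insert_eq, Set.image_singleton, Ideal.mem_span_pair] at hc0mem
  obtain ⟨d1, d2, hd⟩ := hc0mem
  -- glue c1, c2
  have hx : MvPolynomial.X 1 * (c1 - MvPolynomial.X 0 * d1)
      = MvPolynomial.X 2 * (c2 + MvPolynomial.X 0 * d2) := by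
    linear_combination -hco - MvPolynomial.X 0 * hd
  obtain ⟨e, he⟩ := aux_var_dvd (by decide) hx
  have he2 : c2 + MvPolynomial.X 0 * d2 = MvPolynomial.X 1 * e := by
    apply mul_left_cancel₀ (MvPolynomial.X_ne_zero (2 : Fin 3))
    linear_combination -hx + MvPolynomial.X 1 * he
  -- produce B
  have hB' : MvPolynomial.X 1 * (b0 - F * e) = MvPolynomial.X 0 * (b1 - F * d2) := by
    linear_combination hc2 + F * he2
  obtain ⟨B, hB⟩ := aux_var_dvd (by decide) hB'
  -- produce A
  have hA' : MvPolynomial.X 1 * (a0 + G * e) = MvPolynomial.X 0 * (a1 + G * d2) := by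
    linear_combination ha01 - G * he2
  obtain ⟨A, hA⟩ := aux_var_dvd (by decide) hA'
  refine ⟨A, B, ?_⟩
  apply mul_left_cancel₀ (MvPolynomial.X_ne_zero (0 : Fin 3))
  linear_combination e0 - F * hA - G * hB

/-- Homogeneous component of a product with a homogeneous polynomial. -/
lemma aux_comp_mul {σ : Type*} {F p : MvPolynomial σ k} {a : ℕ} (hF : F.IsHomogeneous a)
    (m : ℕ) :
    homogeneousComponent m (p * F)
      = (if a ≤ m then homogeneousComponent (m - a) p else 0) * F := by
  calc homogeneousComponent m (p * F)
      = homogeneousComponent m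
          ((∑ j ∈ Finset.range (p.totalDegree + 1), homogeneousComponent j p) * F) := by
        rw [sum_homogeneousComponent]
    _ = ∑ j ∈ Finset.range (p.totalDegree + 1),
          homogeneousComponent m (homogeneousComponent j p * F) := by
        rw [Finset.sum_mul, map_sum]
    _ = ∑ j ∈ Finset.range (p.totalDegree + 1),
          if m = j + a then homogeneousComponent j p * F else 0 := by
        refine Finset.sum_congr rfl fun j _ => ?_
        exact homogeneousComponent_of_mem
          ((mem_homogeneousSubmodule _ _).mpr ((homogeneousComponent_isHomogeneous j p).mul hF))
    _ = (if a ≤ m then homogeneousComponent (m - a) p else 0) * F := by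
        by_cases ham : a ≤ m
        · rw [if_pos ham]
          have hcg : ∀ j ∈ Finset.range (p.totalDegree + 1),
              (if m = j + a then homogeneousComponent j p * F else 0)
                = if m - a = j then homogeneousComponent j p * F else 0 :=
            fun j _ => if_congr (by omega) rfl rfl
          rw [Finset.sum_congr rfl hcg, Finset.sum_ite_eq]
          split_ifs with h
          · rfl
          · rw [Finset.mem_range, not_lt] at h
            rw [homogeneousComponent_eq_zero _ _ (by omega), zero_mul]
        · rw [if_neg ham, zero_mul]
          exact Finset.sum_eq_zero fun j _ => if_neg (by omega)

end Aux

/-- Noether AF+BG, weak form for the plane: if H lies in the ideal generated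
by the coprime homogeneous polynomials F, G in the local ring at every point of ℙ², then
H = AF + BG globally, with A, B homogeneous of the appropriate degrees. -/
theorem stmt14 {k : Type*} [Field k] [IsAlgClosed k] [CharZero k]
    (F G H : MvPolynomial (Fin 3) k) {a b c : ℕ}
    (hF : F.IsHomogeneous a) (hG : G.IsHomogeneous b) (hH : H.IsHomogeneous c)
    (hF0 : F ≠ 0) (hG0 : G ≠ 0)
    (hcop : ∀ p : MvPolynomial (Fin 3) k, p ∣ F → p ∣ G → IsUnit p)
    (hloc : ∀ pt : Fin 3 → k, pt ≠ 0 → ∃ u : MvPolynomial (Fin 3) k,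
      MvPolynomial.eval pt u ≠ 0 ∧ u * H ∈ Ideal.span {F, G}) :
    ∃ A B : MvPolynomial (Fin 3) k,
      A.IsHomogeneous (c - a) ∧ B.IsHomogeneous (c - b) ∧ H = A * F + B * G := by
  have hrel : IsRelPrime F G := hcop
  -- The colon ideal of "denominators"
  have hzero : ∀ x ∈ MvPolynomial.zeroLocus k
      ((Ideal.span {F, G}).colon (Ideal.span {H})), x = (0 : Fin 3 → k) := by
    intro x hx
    by_contra hx0
    obtain ⟨u, hu0, huH⟩ := hloc x hx0
    exact hu0 (hx u (Ideal.mem_colon_span_singleton.mpr huH))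
  have hXrad : ∀ i : Fin 3,
      MvPolynomial.X i ∈ ((Ideal.span {F, G}).colon (Ideal.span {H})).radical := by
    intro i
    rw [← MvPolynomial.vanishingIdeal_zeroLocus_eq_radical (K := k),
      MvPolynomial.mem_vanishingIdeal_iff]
    intro x hx
    rw [MvPolynomial.aeval_X, hzero x hx]
    rfl
  obtain ⟨n0, hn0⟩ := Ideal.mem_radical_iff.mp (hXrad 0)
  obtain ⟨n1, hn1⟩ := Ideal.mem_radical_iff.mp (hXrad 1)
  obtain ⟨n2, hn2⟩ := Ideal.mem_radical_iff.mp (hXrad 2)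
  have hpow : ∀ (i : Fin 3) (n : ℕ),
      MvPolynomial.X i ^ n ∈ (Ideal.span {F, G}).colon (Ideal.span {H}) →
      n ≤ max (max n0 n1) n2 →
      MvPolynomial.X i ^ (max (max n0 n1) n2) * H ∈ Ideal.span {F, G} := by
    intro i n hn hle
    rw [← smul_eq_mul]
    apply Ideal.mem_colon_span_singleton.mp
    rcases Nat.exists_eq_add_of_le hle with ⟨t, ht⟩
    rw [ht, pow_add]
    exact Ideal.mul_mem_right _ _ hn
  set N : ℕ := max (max n0 n1) n2 with hN
  have hpow0 := hpow 0 n0 hn0 (by omega)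
  have hpow1 := hpow 1 n1 hn1 (by omega)
  have hpow2 := hpow 2 n2 hn2 (by omega)
  -- descent
  have hP : ∀ D : ℕ, ∀ d0 d1 d2 : ℕ, d0 + d1 + d2 + D = 3 * N →
      (MvPolynomial.X 0 ^ d0 * MvPolynomial.X 1 ^ d1 * MvPolynomial.X 2 ^ d2) * H
        ∈ Ideal.span {F, G} := by
    intro D
    induction D with
    | zero =>
      intro d0 d1 d2 hd
      have hcase : N ≤ d0 ∨ N ≤ d1 ∨ N ≤ d2 := by omega
      rcases hcase with h | h | h
      · rcases Nat.exists_eq_add_of_le h with ⟨t, ht⟩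
        subst ht
        have heq : (MvPolynomial.X (0 : Fin 3) ^ (N + t) * MvPolynomial.X 1 ^ d1
              * MvPolynomial.X 2 ^ d2) * H
            = (MvPolynomial.X 0 ^ t * MvPolynomial.X 1 ^ d1 * MvPolynomial.X 2 ^ d2)
              * (MvPolynomial.X 0 ^ N * H) := by
          rw [pow_add]; ring
        rw [heq]
        exact Ideal.mul_mem_left _ _ hpow0
      · rcases Nat.exists_eq_add_of_le h with ⟨t, ht⟩
        subst ht
        have heq : (MvPolynomial.X (0 : Fin 3) ^ d0 * MvPolynomial.X 1 ^ (N + t)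
              * MvPolynomial.X 2 ^ d2) * H
            = (MvPolynomial.X 0 ^ d0 * MvPolynomial.X 1 ^ t * MvPolynomial.X 2 ^ d2)
              * (MvPolynomial.X 1 ^ N * H) := by
          rw [pow_add]; ring
        rw [heq]
        exact Ideal.mul_mem_left _ _ hpow1
      · rcases Nat.exists_eq_add_of_le h with ⟨t, ht⟩
        subst ht
        have heq : (MvPolynomial.X (0 : Fin 3) ^ d0 * MvPolynomial.X 1 ^ d1
              * MvPolynomial.X 2 ^ (N + t)) * H
            = (MvPolynomial.X 0 ^ d0 * MvPolynomial.X 1 ^ d1 * MvPolynomial.X 2 ^ t)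
              * (MvPolynomial.X 2 ^ N * H) := by
          rw [pow_add]; ring
        rw [heq]
        exact Ideal.mul_mem_left _ _ hpow2
    | succ D ih =>
      intro d0 d1 d2 hd
      apply aux_keyL hF0 hrel
      · have h' := ih (d0 + 1) d1 d2 (by omega)
        have heq : (MvPolynomial.X (0 : Fin 3) ^ (d0 + 1) * MvPolynomial.X 1 ^ d1
              * MvPolynomial.X 2 ^ d2) * H
            = MvPolynomial.X 0 *
              ((MvPolynomial.X 0 ^ d0 * MvPolynomial.X 1 ^ d1 * MvPolynomial.X 2 ^ d2) * H) := by
          ring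
        rwa [heq] at h'
      · have h' := ih d0 (d1 + 1) d2 (by omega)
        have heq : (MvPolynomial.X (0 : Fin 3) ^ d0 * MvPolynomial.X 1 ^ (d1 + 1)
              * MvPolynomial.X 2 ^ d2) * H
            = MvPolynomial.X 1 *
              ((MvPolynomial.X 0 ^ d0 * MvPolynomial.X 1 ^ d1 * MvPolynomial.X 2 ^ d2) * H) := by
          ring
        rwa [heq] at h'
      · have h' := ih d0 d1 (d2 + 1) (by omega)
        have heq : (MvPolynomial.X (0 : Fin 3) ^ d0 * MvPolynomial.X 1 ^ d1
              * MvPolynomial.X 2 ^ (d2 + 1)) * H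
            = MvPolynomial.X 2 *
              ((MvPolynomial.X 0 ^ d0 * MvPolynomial.X 1 ^ d1 * MvPolynomial.X 2 ^ d2) * H) := by
          ring
        rwa [heq] at h'
  have hmem : H ∈ Ideal.span {F, G} := by
    have h := hP (3 * N) 0 0 0 (by omega)
    simpa using h
  rw [Ideal.mem_span_pair] at hmem
  obtain ⟨A', B', hAB⟩ := hmem
  refine ⟨if a ≤ c then homogeneousComponent (c - a) A' else 0,
          if b ≤ c then homogeneousComponent (c - b) B' else 0, ?_, ?_, ?_⟩
  · split_ifs with h
    · exact homogeneousComponent_isHomogeneous _ _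
    · exact isHomogeneous_zero _ _ _
  · split_ifs with h
    · exact homogeneousComponent_isHomogeneous _ _
    · exact isHomogeneous_zero _ _ _
  · have hHc : homogeneousComponent c H = H := by
      rw [homogeneousComponent_of_mem ((mem_homogeneousSubmodule _ _).mpr hH), if_pos rfl]
    calc H = homogeneousComponent c H := hHc.symm
      _ = homogeneousComponent c (A' * F + B' * G) := by rw [hAB]
      _ = _ := by rw [map_add, aux_comp_mul hF c, aux_comp_mul hG c]
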